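/- arXiv:1908.04965 — 2 statements merged into one kernel-verified Lean document; each statement's English description precedes it below -/
import Mathlib

section
/- Let g : ℝ → SO₃ satisfy g' = a g, g(0) = I, with a(t) ∈ so₃ nonvanishing, and let ω(t) ∈ ℝ³ be the vector with a = a_ω. Set n := ω/|ω| and N(t) := g(t)⁻¹ n(t). Then g(t)N(t) = n(t) and g(t)N'(t) = n'(t) for all t (Poinsot's rolling theorem). -/
open Matrix
attribute [local instance] Matrix.linftyOpNormedAddCommGroup Matrix.linftyOpNormedSpace

/-- The matrix `a_ω` of the map `x ↦ ω × x`. -/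
def hatMap (u : Fin 3 → ℝ) : Matrix (Fin 3) (Fin 3) ℝ :=
  !![0, -u 2, u 1; u 2, 0, -u 0; -u 1, u 0, 0]

lemma hatMap_mulVec_self (u : Fin 3 → ℝ) : (hatMap u).mulVec u = 0 := by
  funext i
  fin_cases i <;>
    simp [hatMap, Matrix.mulVec, dotProduct, Fin.sum_univ_three] <;> ring

lemma hasDerivAt_entry {g : ℝ → Matrix (Fin 3) (Fin 3) ℝ}
    {g' : Matrix (Fin 3) (Fin 3) ℝ} {t : ℝ} (hg : HasDerivAt g g' t)
    (i j : Fin 3) : HasDerivAt (fun s => g s i j) (g' i j) t := by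
  exact ((Matrix.entryLinearMap ℝ ℝ i j :
      Matrix (Fin 3) (Fin 3) ℝ →ₗ[ℝ] ℝ).toContinuousLinearMap.hasFDerivAt.comp_hasDerivAt
      t hg : _)

lemma hasDerivAt_mulVec {g : ℝ → Matrix (Fin 3) (Fin 3) ℝ}
    {v : ℝ → Fin 3 → ℝ} {g' : Matrix (Fin 3) (Fin 3) ℝ} {v' : Fin 3 → ℝ} {t : ℝ}
    (hg : HasDerivAt g g' t) (hv : HasDerivAt v v' t) :
    HasDerivAt (fun s => (g s).mulVec (v s))
      (g'.mulVec (v t) + (g t).mulVec v') t := by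
  rw [hasDerivAt_pi]
  intro i
  have h : HasDerivAt (fun s => ∑ j, g s i j * v s j)
      (∑ j, (g' i j * v t j + g t i j * v' j)) t := by
    apply HasDerivAt.fun_sum
    intro j _
    exact (hasDerivAt_entry hg i j).mul (hasDerivAt_pi.1 hv j)
  convert h using 1
  all_goals try rfl
  all_goals simp [Matrix.mulVec, dotProduct, Finset.sum_add_distrib]

/-- Poinsot's rolling theorem: if `g : ℝ → SO₃` satisfies `g' = a_ω g`,
`g(0) = I`, with `ω` nonvanishing, `n := ω/|ω|`, `N := g⁻¹ n`, then
`g N = n` and `g N' = n'`. -/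
theorem stmt_15 (g : ℝ → Matrix (Fin 3) (Fin 3) ℝ)
    (ω n N n' N' : ℝ → Fin 3 → ℝ)
    (horth : ∀ t, g t * (g t)ᵀ = 1) (hdet : ∀ t, (g t).det = 1)
    (h0 : g 0 = 1)
    (hg : ∀ t, HasDerivAt g (hatMap (ω t) * g t) t)
    (hω : ∀ t, ω t ≠ 0)
    (hn : ∀ t, n t =
      (Real.sqrt (ω t 0 ^ 2 + ω t 1 ^ 2 + ω t 2 ^ 2))⁻¹ • ω t)
    (hN : ∀ t, N t = ((g t)⁻¹).mulVec (n t))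
    (hn' : ∀ t, HasDerivAt n (n' t) t)
    (hN' : ∀ t, HasDerivAt N (N' t) t) :
    ∀ t, (g t).mulVec (N t) = n t ∧ (g t).mulVec (N' t) = n' t := by
  have hfun : ∀ s, (g s).mulVec (N s) = n s := by
    intro s
    have hinv : (g s)⁻¹ = (g s)ᵀ := Matrix.inv_eq_right_inv (horth s)
    rw [hN s, Matrix.mulVec_mulVec, hinv, horth s, Matrix.one_mulVec]
  intro t
  refine ⟨hfun t, ?_⟩
  have hD : HasDerivAt (fun s => (g s).mulVec (N s))
      ((hatMap (ω t) * g t).mulVec (N t) + (g t).mulVec (N' t)) t :=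
    hasDerivAt_mulVec (hg t) (hN' t)
  rw [funext hfun] at hD
  have huniq := hD.unique (hn' t)
  have hz : (hatMap (ω t) * g t).mulVec (N t) = 0 := by
    rw [← Matrix.mulVec_mulVec, hfun t, hn t, Matrix.mulVec_smul,
      hatMap_mulVec_self, smul_zero]
  rw [hz, zero_add] at huniq
  exact huniq
end

section
/- Let (u(t), v(t)) be a nonvanishing solution of the linear system d/dt (u,v)ᵀ = −(1/(2ℓ))[[ẋ, ẏ],[ẏ, −ẋ]](u,v)ᵀ, where (x(t), y(t)) is a smooth plane curve and ℓ > 0. Then θ(t) := 2 arg(u(t) + i v(t)) satisfies the bicycle equation ℓ θ̇ = ẋ sin θ − ẏ cos θ. -/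
/-- If `(u,v)` is a nonvanishing solution of the linear bicycle system, then
`θ := 2 arg(u + iv)` (a continuous choice of argument) satisfies the bicycle
equation `ℓ θ̇ = ẋ sin θ − ẏ cos θ`. -/
theorem stmt_19 (ℓ : ℝ) (hℓ : 0 < ℓ)
    (x y x' y' u v θ θ' : ℝ → ℝ)
    (hx : ∀ t, HasDerivAt x (x' t) t)
    (hy : ∀ t, HasDerivAt y (y' t) t)
    (hu : ∀ t, HasDerivAt u (-(1 / (2 * ℓ)) * (x' t * u t + y' t * v t)) t)
    (hv : ∀ t, HasDerivAt v (-(1 / (2 * ℓ)) * (y' t * u t - x' t * v t)) t)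
    (hnz : ∀ t, (u t, v t) ≠ (0, 0))
    (hθ : ∀ t, HasDerivAt θ (θ' t) t)
    (harg : ∀ t, (u t : ℂ) + v t * Complex.I =
      (Real.sqrt (u t ^ 2 + v t ^ 2) : ℂ) * Complex.exp ((θ t / 2) * Complex.I)) :
    ∀ t, ℓ * θ' t = x' t * Real.sin (θ t) - y' t * Real.cos (θ t) := by
  -- pointwise polar representation
  have hrep : ∀ t, u t = Real.sqrt (u t ^ 2 + v t ^ 2) * Real.cos (θ t / 2) ∧
      v t = Real.sqrt (u t ^ 2 + v t ^ 2) * Real.sin (θ t / 2) := by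
    intro t
    have h := harg t
    rw [show ((θ t : ℂ) / 2) = ((θ t / 2 : ℝ) : ℂ) by push_cast; ring] at h
    rw [Complex.ext_iff] at h
    simp only [Complex.add_re, Complex.add_im, Complex.mul_re, Complex.mul_im,
      Complex.ofReal_re, Complex.ofReal_im, Complex.I_re, Complex.I_im,
      Complex.exp_ofReal_mul_I_re, Complex.exp_ofReal_mul_I_im] at h
    constructor <;> [linarith [h.1]; linarith [h.2]]
  -- the function g ≡ 0
  set g : ℝ → ℝ := fun t => v t * Real.cos (θ t / 2) - u t * Real.sin (θ t / 2) with hg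
  have hg0 : g = fun _ => (0 : ℝ) := by
    funext s
    obtain ⟨h1, h2⟩ := hrep s
    simp only [hg]
    linear_combination (Real.cos (θ s / 2)) * h2 - (Real.sin (θ s / 2)) * h1
  intro t
  obtain ⟨h1, h2⟩ := hrep t
  set r := Real.sqrt (u t ^ 2 + v t ^ 2) with hr
  have hrpos : 0 < r := by
    have hne : u t ^ 2 + v t ^ 2 ≠ 0 := by
      intro h
      have hu0 : u t = 0 := by nlinarith [sq_nonneg (u t), sq_nonneg (v t)]
      have hv0 : v t = 0 := by nlinarith [sq_nonneg (u t), sq_nonneg (v t)]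
      exact hnz t (by simp [hu0, hv0])
    have : 0 < u t ^ 2 + v t ^ 2 := lt_of_le_of_ne (by positivity) (Ne.symm hne)
    exact Real.sqrt_pos.mpr this
  set c := Real.cos (θ t / 2) with hc
  set s := Real.sin (θ t / 2) with hs
  -- derivative of g at t
  have hhalf : HasDerivAt (fun t => θ t / 2) (θ' t / 2) t := (hθ t).div_const 2
  have hcosd : HasDerivAt (fun t => Real.cos (θ t / 2)) (-s * (θ' t / 2)) t :=
    by have h := (Real.hasDerivAt_cos (θ t / 2)).comp t hhalf; exact h
  have hsind : HasDerivAt (fun t => Real.sin (θ t / 2)) (c * (θ' t / 2)) t :=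
    by have h := (Real.hasDerivAt_sin (θ t / 2)).comp t hhalf; exact h
  have hgd : HasDerivAt g
      ((-(1 / (2 * ℓ)) * (y' t * u t - x' t * v t)) * c + v t * (-s * (θ' t / 2))
        - ((-(1 / (2 * ℓ)) * (x' t * u t + y' t * v t)) * s + u t * (c * (θ' t / 2)))) t :=
    ((hv t).mul hcosd).sub ((hu t).mul hsind)
  have hzero : HasDerivAt g 0 t := by rw [hg0]; exact hasDerivAt_const t 0
  have hE : (-(1 / (2 * ℓ)) * (y' t * u t - x' t * v t)) * c + v t * (-s * (θ' t / 2))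
        - ((-(1 / (2 * ℓ)) * (x' t * u t + y' t * v t)) * s + u t * (c * (θ' t / 2))) = 0 :=
    hgd.unique hzero
  rw [h1, h2] at hE
  have hp : c ^ 2 + s ^ 2 = 1 := by
    rw [hc, hs, add_comm]; exact Real.sin_sq_add_cos_sq _
  have hθt : θ t = 2 * (θ t / 2) := by ring
  rw [hθt, Real.sin_two_mul, Real.cos_two_mul']
  rw [← hc, ← hs]
  have key : r * (ℓ * θ' t - (x' t * (2 * s * c) - y' t * (c ^ 2 - s ^ 2))) = 0 := by
    have hℓ' : ℓ ≠ 0 := ne_of_gt hℓ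
    field_simp at hE
    linear_combination (-(1:ℝ)) * hE + (-(ℓ * θ' t * r)) * hp
  have := mul_eq_zero.mp key
  rcases this with h | h
  · exact absurd h (ne_of_gt hrpos)
  · linarith
end
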